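/- A Type 1 RE matrix A (with parameters λ, μ, b₋, b₊ and λμ ≠ 0) is diagonalizable over ℂ if and only if λ ≠ μ. -/
import Mathlib


open Matrix

/-- Membership in `Y = [1,b₋] ∪ [b₊, b₊+b₋-1]` (1-based). -/
def memY (bm bp k : ℕ) : Prop := (1 ≤ k ∧ k ≤ bm) ∨ (bp ≤ k ∧ k ≤ bp + bm - 1)

instance (bm bp k : ℕ) : Decidable (memY bm bp k) := by unfold memY; infer_instance

noncomputable def twm (n bm bp : ℕ) (c : ℕ → ℂ) : Matrix (Fin n) (Fin n) ℂ :=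
  Matrix.of fun j i =>
    if memY bm bp ((i : ℕ) + 1) ∧ (j : ℕ) + 1 = bp + bm - ((i : ℕ) + 1) then c ((i : ℕ) + 1) else 0

noncomputable def dgm (n : ℕ) (f : ℕ → ℂ) : Matrix (Fin n) (Fin n) ℂ :=
  Matrix.diagonal fun i => f ((i : ℕ) + 1)

section lemmas
variable {n bm bp : ℕ} {f g c c' : ℕ → ℂ}

lemma dgm_mul_dgm : dgm n f * dgm n g = dgm n (fun k => f k * g k) := by
  unfold dgm; rw [Matrix.diagonal_mul_diagonal]

lemma dgm_add : dgm n f + dgm n g = dgm n (fun k => f k + g k) := by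
  unfold dgm; rw [Matrix.diagonal_add]

lemma dgm_sub : dgm n f - dgm n g = dgm n (fun k => f k - g k) := by
  unfold dgm; rw [Matrix.diagonal_sub]

lemma twm_add : twm n bm bp c + twm n bm bp c' = twm n bm bp (fun k => c k + c' k) := by
  ext j i
  simp only [twm, Matrix.add_apply, Matrix.of_apply]
  split_ifs <;> simp

lemma dgm_mul_twm : dgm n f * twm n bm bp c
    = twm n bm bp (fun k => f (bp + bm - k) * c k) := by
  ext j i
  rw [dgm, Matrix.diagonal_mul]
  simp only [twm, Matrix.of_apply]
  split_ifs with h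
  · rw [h.2]
  · exact mul_zero _

lemma twm_mul_dgm : twm n bm bp c * dgm n g
    = twm n bm bp (fun k => c k * g k) := by
  ext j i
  rw [dgm, Matrix.mul_diagonal]
  simp only [twm, Matrix.of_apply]
  split_ifs with h
  · rfl
  · exact zero_mul _

lemma twm_congr (h : ∀ k, memY bm bp k → c k = c' k) : twm n bm bp c = twm n bm bp c' := by
  ext j i
  simp only [twm, Matrix.of_apply]
  split_ifs with hh
  · exact h _ hh.1
  · rfl

lemma dgm_congr (h : ∀ k, 1 ≤ k → k ≤ n → f k = g k) : dgm n f = dgm n g := by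
  ext j i
  simp only [dgm, Matrix.diagonal_apply]
  split_ifs with hh
  · exact h _ (Nat.le_add_left _ _) j.isLt
  · rfl

lemma twm_zero : twm n bm bp (fun _ => 0) = 0 := by
  ext j i
  simp only [twm, Matrix.of_apply, Matrix.zero_apply]
  split_ifs <;> rfl

lemma dgm_one : dgm n (fun _ => 1) = 1 := by
  unfold dgm; exact Matrix.diagonal_one

lemma dgm_zero : dgm n (fun _ => 0) = 0 := by
  unfold dgm; exact Matrix.diagonal_zero

lemma smul_one_eq_dgm (a : ℂ) : a • (1 : Matrix (Fin n) (Fin n) ℂ) = dgm n (fun _ => a) := by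
  ext j i
  simp [dgm, Matrix.diagonal_apply, Matrix.one_apply, mul_ite]

lemma twm_mul_twm (hbm : 1 ≤ bm) (hb : bm < bp) (hbn : bm + bp ≤ n + 1) :
    twm n bm bp c * twm n bm bp c'
      = dgm n (fun k => if memY bm bp k then c (bp + bm - k) * c' k else 0) := by
  ext j i
  rw [Matrix.mul_apply]
  simp only [twm, dgm, Matrix.of_apply, Matrix.diagonal_apply]
  by_cases hi : memY bm bp ((i : ℕ) + 1)
  · have hmem : memY bm bp (bp + bm - ((i : ℕ) + 1)) := by unfold memY at *; omega
    have hm1 : 1 ≤ bp + bm - ((i : ℕ) + 1) := by unfold memY at hi; omega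
    have hmn : bp + bm - ((i : ℕ) + 1) ≤ n := by unfold memY at hi; omega
    have hback : bp + bm - (bp + bm - ((i : ℕ) + 1)) = (i : ℕ) + 1 := by
      unfold memY at hi; omega
    set k0 : Fin n := ⟨bp + bm - ((i : ℕ) + 1) - 1, by omega⟩ with hk0
    have hk0v : (k0 : ℕ) + 1 = bp + bm - ((i : ℕ) + 1) := by simp [hk0]; omega
    rw [Finset.sum_eq_single k0]
    · simp only [hk0v, hi, hback, and_true, hmem, true_and, if_true]
      by_cases hji : j = i
      · subst hji
        rw [if_pos rfl, if_pos rfl, if_pos hi]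
      · rw [if_neg, if_neg hji, zero_mul]
        intro h
        exact hji (Fin.ext (by omega))
    · intro k _ hk
      have hne : (k : ℕ) + 1 ≠ bp + bm - ((i : ℕ) + 1) := by
        intro h; exact hk (Fin.ext (by omega))
      exact mul_eq_zero_of_right _ (if_neg (fun h => hne h.2))
    · intro h; exact absurd (Finset.mem_univ _) h
  · rw [Finset.sum_eq_zero]
    · by_cases hji : j = i
      · subst hji; rw [if_pos rfl, if_neg hi]
      · rw [if_neg hji]
    · intro k _
      exact mul_eq_zero_of_right _ (if_neg (fun h => hi h.1))

end lemmas



/-- The Type 1 matrix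
`A = Σ_{i=1}^{b₋} (λ+μ) e^i_i + Σ_{b₋<i<b₊} λ e^i_i + Σ_{i∈Y} y_i e^{b₊+b₋-i}_i`,
written in 0-based indices (`i : Fin n` corresponds to the 1-based index `i+1`);
the entry in row `j`, column `i` is `A j i`. -/
noncomputable def typeOne (n bm bp : ℕ) (lam mu : ℂ) (y : ℕ → ℂ) :
    Matrix (Fin n) (Fin n) ℂ :=
  fun j i =>
    (if j = i then
       (if (i : ℕ) + 1 ≤ bm then lam + mu
        else if (i : ℕ) + 1 < bp then lam else 0)
     else 0) +
    (if memY bm bp ((i : ℕ) + 1) ∧ (j : ℕ) + 1 = bp + bm - ((i : ℕ) + 1) then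
       y ((i : ℕ) + 1)
     else 0)

noncomputable def dAf (bm bp : ℕ) (lam mu : ℂ) : ℕ → ℂ :=
  fun k => if k ≤ bm then lam + mu else if k < bp then lam else 0

lemma typeOne_eq (n bm bp : ℕ) (lam mu : ℂ) (y : ℕ → ℂ) :
    typeOne n bm bp lam mu y = dgm n (dAf bm bp lam mu) + twm n bm bp y := by
  ext j i
  simp only [typeOne, dgm, dAf, twm, Matrix.add_apply, Matrix.of_apply, Matrix.diagonal_apply]
  congr 1
  by_cases hji : j = i
  · subst hji; rw [if_pos rfl]
  · rw [if_neg hji, if_neg hji]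

lemma memY_flip {bm bp k : ℕ} (hb : bm < bp) (hk : memY bm bp k) :
    memY bm bp (bp + bm - k) := by
  unfold memY at *; omega

lemma memY_flip_flip {bm bp k : ℕ} (hk : memY bm bp k) :
    bp + bm - (bp + bm - k) = k := by
  unfold memY at hk; omega

section mixed
variable {n bm bp : ℕ}

lemma mixed_mul (hbm : 1 ≤ bm) (hb : bm < bp) (hbn : bm + bp ≤ n + 1)
    (f g c c' : ℕ → ℂ) :
    (dgm n f + twm n bm bp c) * (dgm n g + twm n bm bp c')
      = dgm n (fun k => f k * g k + if memY bm bp k then c (bp + bm - k) * c' k else 0)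
        + twm n bm bp (fun k => f (bp + bm - k) * c' k + c k * g k) := by
  rw [mul_add, add_mul, add_mul, dgm_mul_dgm, dgm_mul_twm, twm_mul_dgm,
    twm_mul_twm hbm hb hbn]
  ext j i
  simp only [dgm, twm, Matrix.add_apply, Matrix.of_apply, Matrix.diagonal_apply]
  split_ifs <;> ring

lemma mixed_mul_dgm (f g c : ℕ → ℂ) :
    (dgm n f + twm n bm bp c) * dgm n g
      = dgm n (fun k => f k * g k) + twm n bm bp (fun k => c k * g k) := by
  rw [add_mul, dgm_mul_dgm, twm_mul_dgm]

end mixed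

noncomputable def dPf (bm bp : ℕ) (lam : ℂ) (y : ℕ → ℂ) : ℕ → ℂ :=
  fun k => if k ≤ bm then -y (bp + bm - k)
    else if bp ≤ k ∧ k ≤ bp + bm - 1 then lam else 1

noncomputable def cPf (bm : ℕ) (mu : ℂ) (y : ℕ → ℂ) : ℕ → ℂ :=
  fun k => if k ≤ bm then mu else -y k

noncomputable def dQf (bm bp : ℕ) (lam mu : ℂ) (y : ℕ → ℂ) : ℕ → ℂ :=
  fun k => if k ≤ bm then lam / (-y (bp + bm - k) * (lam - mu))
    else if bp ≤ k ∧ k ≤ bp + bm - 1 then 1 / (lam - mu) else 1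

noncomputable def cQf (bm bp : ℕ) (lam mu : ℂ) (y : ℕ → ℂ) : ℕ → ℂ :=
  fun k => if k ≤ bm then mu / (y (bp + bm - k) * (lam - mu)) else -(1 / (lam - mu))

noncomputable def dDf (bm bp : ℕ) (lam mu : ℂ) : ℕ → ℂ :=
  fun k => if k < bp then lam else if k ≤ bp + bm - 1 then mu else 0

/-- A Type 1 RE matrix is diagonalizable over `ℂ` if and only if `λ ≠ μ`. -/
theorem typeOne_diagonalizable_iff (n : ℕ) (hn : 1 ≤ n) (bm bp : ℕ)
    (hbm : 1 ≤ bm) (hb : bm < bp) (hbn : bm + bp ≤ n + 1)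
    (lam mu : ℂ) (hlm : lam * mu ≠ 0) (y : ℕ → ℂ)
    (hy : ∀ k : ℕ, memY bm bp k → y k * y (bp + bm - k) = -(lam * mu)) :
    (∃ P : Matrix (Fin n) (Fin n) ℂ, IsUnit P.det ∧
        (P⁻¹ * typeOne n bm bp lam mu y * P).IsDiag) ↔ lam ≠ mu := by
  have hbn' : bm + bp ≤ n + 1 := hbn
  have hy0 : ∀ k, memY bm bp k → y k ≠ 0 := by
    intro k hk h0
    have h2 := hy k hk
    rw [h0, zero_mul] at h2
    exact hlm (neg_eq_zero.mp h2.symm)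
  have hy' : ∀ k, memY bm bp k → y (bp + bm - k) * y k = -(lam * mu) := by
    intro k hk
    have h2 := hy (bp + bm - k) (memY_flip hb hk)
    rwa [memY_flip_flip hk] at h2
  constructor
  · -- diagonalizable → lam ≠ mu
    rintro ⟨P, hPdet, hPdiag⟩ heq
    subst heq
    have hl0 : lam ≠ 0 := fun h => hlm (by rw [h, zero_mul])
    set A := typeOne n bm bp lam lam y with hAdef
    have hA : A = dgm n (dAf bm bp lam lam) + twm n bm bp y := typeOne_eq _ _ _ _ _ _
    set C := dgm n (fun k => dAf bm bp lam lam k - lam) + twm n bm bp y with hCdef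
    have hC : C = A - lam • 1 := by
      rw [hA, smul_one_eq_dgm, add_sub_right_comm, dgm_sub]
    -- A * C * C = 0
    have hACC : A * C * C = 0 := by
      rw [hA, hCdef, mixed_mul hbm hb hbn', mixed_mul hbm hb hbn']
      have hz : (0 : Matrix (Fin n) (Fin n) ℂ)
          = dgm n (fun _ => 0) + twm n bm bp (fun _ => 0) := by
        rw [dgm_zero, twm_zero, add_zero]
      rw [hz]
      congr 1
      · refine dgm_congr ?_
        intro k hk1 hkn
        simp only [dAf]
        by_cases h1 : k ≤ bm
        · have hmY : memY bm bp k := Or.inl ⟨hk1, h1⟩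
          have hj1 : ¬ (bp + bm - k ≤ bm) := by omega
          have hj2 : ¬ (bp + bm - k < bp) := by omega
          have hflip : bp + bm - (bp + bm - k) = k := memY_flip_flip hmY
          have hyk := hy' k hmY
          simp only [hflip, if_pos h1, if_neg hj1, if_neg hj2, if_pos hmY]
          linear_combination (2 * lam) * hyk
        · by_cases h2 : bp ≤ k ∧ k ≤ bp + bm - 1
          · have hmY : memY bm bp k := Or.inr h2
            have hj1 : bp + bm - k ≤ bm := by omega
            have hj2 : bp + bm - k < bp := by omega
            have hflip : bp + bm - (bp + bm - k) = k := memY_flip_flip hmY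
            have hk3 : ¬ (k < bp) := by omega
            simp only [hflip, if_pos hj1, if_neg h1, if_neg hk3, if_pos hmY]
            ring
          · have hmY : ¬ memY bm bp k := by unfold memY; omega
            simp only [if_neg hmY, if_neg h1]
            by_cases h3 : k < bp
            · simp only [if_pos h3]; ring
            · simp only [if_neg h3]; ring
      · refine twm_congr ?_
        intro k hk
        simp only [dAf]
        have hmY' : memY bm bp (bp + bm - k) := memY_flip hb hk
        have hflip : bp + bm - (bp + bm - k) = k := memY_flip_flip hk
        have hyk := hy k hk
        rcases hk with ⟨hk1, hk2⟩ | ⟨hk1, hk2⟩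
        · have ha1 : k ≤ bm := hk2
          have hb1 : ¬ (bp + bm - k ≤ bm) := by omega
          have hb2 : ¬ (bp + bm - k < bp) := by omega
          simp only [hflip, if_pos hmY', if_pos ha1, if_neg hb1, if_neg hb2]
          linear_combination (y k) * hyk
        · have ha1 : ¬ (k ≤ bm) := by omega
          have ha2 : ¬ (k < bp) := by omega
          have hb1 : bp + bm - k ≤ bm := by omega
          have hb3 : 1 ≤ bp + bm - k := by omega
          simp only [hflip, if_pos hmY', if_neg ha1, if_neg ha2, if_pos hb1]
          linear_combination (y k) * hyk
    -- conjugation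
    have h₁ : P * P⁻¹ = 1 := Matrix.mul_nonsing_inv P hPdet
    have h₂ : P⁻¹ * P = 1 := Matrix.nonsing_inv_mul P hPdet
    have hPX : ∀ X : Matrix (Fin n) (Fin n) ℂ, P * (P⁻¹ * X) = X := by
      intro X; rw [← Matrix.mul_assoc, h₁, Matrix.one_mul]
    have hPX' : ∀ X : Matrix (Fin n) (Fin n) ℂ, P⁻¹ * (P * X) = X := by
      intro X; rw [← Matrix.mul_assoc, h₂, Matrix.one_mul]
    set B := P⁻¹ * A * P with hBdef
    have hPB : A = P * B * P⁻¹ := by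
      rw [hBdef, ← Matrix.mul_assoc, ← Matrix.mul_assoc, h₁, Matrix.one_mul,
        Matrix.mul_assoc, h₁, Matrix.mul_one]
    have hBc : P⁻¹ * C * P = B - lam • 1 := by
      rw [hC, Matrix.mul_sub, Matrix.sub_mul, hBdef]
      congr 1
      rw [mul_smul_comm, Matrix.mul_one, smul_mul_assoc, h₂]
    have hBBB : B * (B - lam • 1) * (B - lam • 1) = 0 := by
      rw [← hBc, hBdef]
      have : P⁻¹ * A * P * (P⁻¹ * C * P) * (P⁻¹ * C * P) = P⁻¹ * (A * C * C) * P := by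
        simp only [Matrix.mul_assoc, hPX]
      rw [this, hACC, Matrix.mul_zero, Matrix.zero_mul]
    have hBd : Matrix.diagonal B.diag = B := hPdiag.diagonal_diag
    have hsm : lam • (1 : Matrix (Fin n) (Fin n) ℂ)
        = Matrix.diagonal (fun _ => lam) := by
      ext j i
      simp [Matrix.one_apply, Matrix.diagonal_apply, mul_ite]
    have hdv : ∀ i, B.diag i * (B.diag i - lam) = 0 := by
      intro i
      rw [← hBd, hsm, Matrix.diagonal_sub, Matrix.diagonal_mul_diagonal,
        Matrix.diagonal_mul_diagonal] at hBBB
      have h5 := congrFun (congrFun hBBB i) i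
      simp only [Matrix.diagonal_apply_eq, Matrix.zero_apply, Pi.sub_apply] at h5
      rcases mul_eq_zero.mp h5 with h | h
      · exact h
      · exact mul_eq_zero_of_right _ h
    have hBB0 : B * (B - lam • 1) = 0 := by
      rw [← hBd, hsm, Matrix.diagonal_sub, Matrix.diagonal_mul_diagonal]
      ext j i
      rw [Matrix.diagonal_apply]
      split_ifs with h
      · subst h
        simpa using hdv j
      · rfl
    have hAC0 : A * C = 0 := by
      have hCB : C = P * (B - lam • 1) * P⁻¹ := by
        rw [← hBc, ← Matrix.mul_assoc, Matrix.mul_assoc, Matrix.mul_assoc, h₁,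
          Matrix.mul_one, ← Matrix.mul_assoc, h₁, Matrix.one_mul]
      rw [hPB, hCB]
      have : P * B * P⁻¹ * (P * (B - lam • 1) * P⁻¹)
          = P * (B * (B - lam • 1)) * P⁻¹ := by
        simp only [Matrix.mul_assoc, hPX']
      rw [this, hBB0, Matrix.mul_zero, Matrix.zero_mul]
    -- entry computation gives contradiction
    have hform : A * C = dgm n (fun k =>
          dAf bm bp lam lam k * (dAf bm bp lam lam k - lam)
            + if memY bm bp k then y (bp + bm - k) * y k else 0)
        + twm n bm bp (fun k =>
          dAf bm bp lam lam (bp + bm - k) * y k + y k * (dAf bm bp lam lam k - lam)) := by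
      rw [hA, hCdef, mixed_mul hbm hb hbn']
    have h0 : dgm n (fun k =>
          dAf bm bp lam lam k * (dAf bm bp lam lam k - lam)
            + if memY bm bp k then y (bp + bm - k) * y k else 0)
        + twm n bm bp (fun k =>
          dAf bm bp lam lam (bp + bm - k) * y k + y k * (dAf bm bp lam lam k - lam)) = 0 :=
      hform.symm.trans hAC0
    have hr : bp + bm - 2 < n := by omega
    have hi0 : (0 : ℕ) < n := by omega
    have he := congrFun (congrFun h0 ⟨bp + bm - 2, hr⟩) ⟨0, hi0⟩
    have hY1 : memY bm bp 1 := Or.inl ⟨le_refl 1, hbm⟩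
    have hne0 : (bp + bm - 2 : ℕ) ≠ 0 := by omega
    simp only [dgm, twm, Matrix.add_apply, Matrix.of_apply, Matrix.diagonal_apply,
      Matrix.zero_apply] at he
    rw [if_neg (fun h : (⟨bp + bm - 2, hr⟩ : Fin n) = ⟨0, hi0⟩ => hne0 (by
      simpa using congrArg Fin.val h))] at he
    rw [if_pos ⟨by simpa using hY1, by simp; omega⟩] at he
    simp only [dAf] at he
    have hd1 : ¬ (bp + bm - (0 + 1) ≤ bm) := by omega
    have hd2 : ¬ (bp + bm - (0 + 1) < bp) := by omega
    rw [if_neg hd1, if_neg hd2] at he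
    rw [if_pos (by omega : (0 : ℕ) + 1 ≤ bm)] at he
    have : y (0 + 1) * lam = 0 := by linear_combination he
    rcases mul_eq_zero.mp this with h | h
    · exact hy0 1 hY1 (by simpa using h)
    · exact hl0 h
  · -- lam ≠ mu → diagonalizable
    intro hne
    have hνne : lam - mu ≠ 0 := sub_ne_zero.mpr hne
    set A := typeOne n bm bp lam mu y with hAdef
    have hA : A = dgm n (dAf bm bp lam mu) + twm n bm bp y := typeOne_eq _ _ _ _ _ _
    set P := dgm n (dPf bm bp lam y) + twm n bm bp (cPf bm mu y) with hPdef
    set Q := dgm n (dQf bm bp lam mu y) + twm n bm bp (cQf bm bp lam mu y) with hQdef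
    set D := dgm n (dDf bm bp lam mu) with hDdef
    have hPQ : P * Q = 1 := by
      rw [hPdef, hQdef, mixed_mul hbm hb hbn']
      have h1 : (1 : Matrix (Fin n) (Fin n) ℂ)
          = dgm n (fun _ => 1) + twm n bm bp (fun _ => 0) := by
        rw [dgm_one, twm_zero, add_zero]
      rw [h1]
      congr 1
      · refine dgm_congr ?_
        intro k hk1 hkn
        simp only [dPf, dQf, cPf, cQf]
        by_cases h1 : k ≤ bm
        · have hmY : memY bm bp k := Or.inl ⟨hk1, h1⟩
          have hj1 : ¬ (bp + bm - k ≤ bm) := by omega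
          have hyj := hy0 (bp + bm - k) (memY_flip hb hmY)
          simp only [if_pos h1, if_neg hj1, if_pos hmY]
          field_simp
          ring
        · by_cases h2 : bp ≤ k ∧ k ≤ bp + bm - 1
          · have hmY : memY bm bp k := Or.inr h2
            have hj1 : bp + bm - k ≤ bm := by omega
            simp only [if_neg h1, if_pos h2, if_pos hj1, if_pos hmY]
            field_simp
            ring
          · have hmY : ¬ memY bm bp k := by unfold memY; omega
            simp only [if_neg h1, if_neg h2, if_neg hmY]
            ring
      · refine twm_congr ?_
        intro k hk
        simp only [dPf, dQf, cPf, cQf]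
        rcases hk with ⟨hk1, hk2⟩ | ⟨hk1, hk2⟩
        · have h1 : k ≤ bm := hk2
          have hj1 : ¬ (bp + bm - k ≤ bm) := by omega
          have hj2 : bp ≤ bp + bm - k ∧ bp + bm - k ≤ bp + bm - 1 := by omega
          have hyj := hy0 (bp + bm - k) (memY_flip hb (Or.inl ⟨hk1, h1⟩))
          simp only [if_pos h1, if_neg hj1, if_pos hj2]
          field_simp
          ring
        · have h1 : ¬ (k ≤ bm) := by omega
          have hj1 : bp + bm - k ≤ bm := by omega
          have hflip : bp + bm - (bp + bm - k) = k := by omega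
          have hj3 : bp ≤ k ∧ k ≤ bp + bm - 1 := ⟨hk1, hk2⟩
          simp only [if_neg h1, if_pos hj1, hflip, if_pos hj3]
          ring
    have hAP : A * P = P * D := by
      rw [hA, hPdef, hDdef, mixed_mul hbm hb hbn', mixed_mul_dgm]
      congr 1
      · refine dgm_congr ?_
        intro k hk1 hkn
        simp only [dAf, dPf, cPf, dDf]
        by_cases h1 : k ≤ bm
        · have hmY : memY bm bp k := Or.inl ⟨hk1, h1⟩
          have hj1 : k < bp := by omega
          simp only [if_pos h1, if_pos hmY, if_pos hj1]
          ring
        · by_cases h2 : bp ≤ k ∧ k ≤ bp + bm - 1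
          · have hmY : memY bm bp k := Or.inr h2
            have hyk := hy' k hmY
            have hj1 : ¬ (k < bp) := by omega
            simp only [if_neg h1, if_pos h2, if_pos hmY, if_neg hj1, if_pos h2.2]
            linear_combination -hyk
          · have hmY : ¬ memY bm bp k := by unfold memY; omega
            simp only [if_neg h1, if_neg h2, if_neg hmY]
            by_cases h3 : k < bp
            · simp only [if_pos h3]; ring
            · have h4 : ¬ (k ≤ bp + bm - 1) := by omega
              simp only [if_neg h3, if_neg h4]; ring
      · refine twm_congr ?_
        intro k hk
        simp only [dAf, dPf, cPf, dDf]
        rcases hk with ⟨hk1, hk2⟩ | ⟨hk1, hk2⟩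
        · have h1 : k ≤ bm := hk2
          have hyk := hy k (Or.inl ⟨hk1, hk2⟩)
          have hj1 : ¬ (bp + bm - k ≤ bm) := by omega
          have hj2 : ¬ (bp + bm - k < bp) := by omega
          have hj3 : k < bp := by omega
          simp only [if_pos h1, if_neg hj1, if_neg hj2, if_pos hj3]
          linear_combination -hyk
        · have h1 : ¬ (k ≤ bm) := by omega
          have hj1 : bp + bm - k ≤ bm := by omega
          have hj2 : ¬ (k < bp) := by omega
          have hj3 : bp ≤ k ∧ k ≤ bp + bm - 1 := ⟨hk1, hk2⟩
          simp only [if_neg h1, if_pos hj1, if_pos hj3, if_neg hj2, if_pos hk2]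
          ring
    refine ⟨P, Matrix.isUnit_det_of_right_inverse hPQ, ?_⟩
    have hQP : Q * P = 1 := mul_eq_one_comm.mp hPQ
    rw [Matrix.inv_eq_right_inv hPQ]
    have : Q * A * P = D := by
      rw [Matrix.mul_assoc, hAP, ← Matrix.mul_assoc, hQP, Matrix.one_mul]
    rw [this, hDdef]
    unfold dgm
    exact Matrix.isDiag_diagonal _
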